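/- Let G = (X, Y, E) be bipartite with |X| = |Y| = n, and let S encode pendant additions as in H(S). If there exists a matching of size n − K in G itself (i.e., ν(H(∅)) ≥ n − K), and W ⊆ X is a set of size K whose pendant graph H(W) has a perfect matching covering Y, then for every set T ⊆ W, H(T) has a matching of size at least n − K + |T|. -/

import Mathlib

variable {X Y : Type*} [DecidableEq X] [DecidableEq Y]

/-- A matching in the bipartite graph with edge set `E`: a subset of edges
that are pairwise vertex-disjoint on both sides. -/
def IsMatching (E m : Finset (X × Y)) : Prop :=
  m ⊆ E ∧ ∀ e ∈ m, ∀ e' ∈ m, e ≠ e' → e.1 ≠ e'.1 ∧ e.2 ≠ e'.2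

/-- The matching `m` covers the vertex `y` on the `Y` side. -/
def CoversY (m : Finset (X × Y)) (y : Y) : Prop := ∃ e ∈ m, e.2 = y

/-- The matching `m` covers the vertex `x` on the `X` side. -/
def CoversX (m : Finset (X × Y)) (x : X) : Prop := ∃ e ∈ m, e.1 = x

/-- Adjacency of the bipartite graph on the vertex type `X ⊕ Y`. -/
def Adj (E : Finset (X × Y)) : X ⊕ Y → X ⊕ Y → Prop
  | .inl x, .inr y => (x, y) ∈ E
  | .inr y, .inl x => (x, y) ∈ E
  | _, _ => False

/-- The (at most one) edge between two vertices of the bipartite graph. -/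
def edgeOf : X ⊕ Y → X ⊕ Y → List (X × Y)
  | .inl x, .inr y => [(x, y)]
  | .inr y, .inl x => [(x, y)]
  | _, _ => []

/-- The list of edges along a path given as a list of vertices. -/
def pathEdges : List (X ⊕ Y) → List (X × Y)
  | a :: b :: rest => edgeOf a b ++ pathEdges (b :: rest)
  | _ => []

/-- A (simple) path in the bipartite graph: consecutive vertices are adjacent,
and no vertex repeats. -/
def IsPath (E : Finset (X × Y)) (p : List (X ⊕ Y)) : Prop :=
  p.Chain' (Adj E) ∧ p.Nodup

/-- A list of edges alternates with respect to the matching `m`. -/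
def Alternates (m : Finset (X × Y)) : List (X × Y) → Prop
  | e1 :: e2 :: rest => (e1 ∈ m ↔ e2 ∉ m) ∧ Alternates m (e2 :: rest)
  | _ => True

/-- The matching `m` covers a vertex of the bipartite graph. -/
def Covers (m : Finset (X × Y)) : X ⊕ Y → Prop
  | .inl x => CoversX m x
  | .inr y => CoversY m y

/-- The maximum matching number of the bipartite graph with edge set `E`. -/
noncomputable def matchNum {A B : Type*} [DecidableEq A] [DecidableEq B]
    (E : Finset (A × B)) : ℕ :=
  sSup {n : ℕ | ∃ m : Finset (A × B), IsMatching E m ∧ m.card = n}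

/-- The auxiliary graph `H(S)`: for each `s ∈ S` a pendant vertex `Sum.inr s` is added
on the `X` side, adjacent only to the designated partner `π s ∈ Y`. -/
def pendantGraph (E : Finset (X × Y)) (π : X → Y) (S : Finset X) :
    Finset ((X ⊕ X) × Y) :=
  E.image (fun e => ((Sum.inl e.1 : X ⊕ X), e.2)) ∪
    S.image (fun s => ((Sum.inr s : X ⊕ X), π s))

lemma mem_pendant_inl {E : Finset (X × Y)} {π : X → Y} {S : Finset X} {x : X} {y : Y} :
    ((Sum.inl x : X ⊕ X), y) ∈ pendantGraph E π S ↔ (x, y) ∈ E := by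
  simp [pendantGraph, Prod.ext_iff]

lemma mem_pendant_inr {E : Finset (X × Y)} {π : X → Y} {S : Finset X} {s : X} {y : Y} :
    ((Sum.inr s : X ⊕ X), y) ∈ pendantGraph E π S ↔ s ∈ S ∧ y = π s := by
  simp only [pendantGraph, Finset.mem_union, Finset.mem_image, Prod.ext_iff]
  constructor
  · rintro (⟨a, _, h, _⟩ | ⟨a, ha, h1, h2⟩)
    · exact absurd h (by simp)
    · exact ⟨(Sum.inr.inj h1) ▸ ha, ((Sum.inr.inj h1) ▸ h2).symm⟩
  · rintro ⟨h1, h2⟩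
    exact Or.inr ⟨s, h1, rfl, h2.symm⟩

lemma matchNum_bddAbove {A B : Type*} [DecidableEq A] [DecidableEq B] (E : Finset (A × B)) :
    BddAbove {n : ℕ | ∃ m : Finset (A × B), IsMatching E m ∧ m.card = n} := by
  refine ⟨E.card, fun k hk => ?_⟩
  obtain ⟨m, hm, rfl⟩ := hk
  exact Finset.card_le_card hm.1

/-- Let `|X| = |Y| = n`. If the base graph has a matching of size
`n − K` (i.e. `ν(H(∅)) ≥ n − K`) and `W ⊆ X` has size `K` with `H(W)` admitting a
matching covering `Y`, then for every `T ⊆ W`, `H(T)` has a matching of size at least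
`n − K + |T|`. -/
theorem subsets_of_dilation_free_set_matching_bound
    [Fintype X] [Fintype Y]
    (n K : ℕ) (hX : Fintype.card X = n) (hY : Fintype.card Y = n)
    (E : Finset (X × Y)) (π : X → Y) (hπ : Function.Injective π)
    (hbase : n - K ≤ matchNum (pendantGraph E π (∅ : Finset X)))
    (W : Finset X) (hW : W.card = K)
    (hperf : ∃ m : Finset ((X ⊕ X) × Y),
      IsMatching (pendantGraph E π W) m ∧ ∀ y : Y, CoversY m y) :
    ∀ T : Finset X, T ⊆ W → n - K + T.card ≤ matchNum (pendantGraph E π T) := by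
  classical
  intro T hT
  obtain ⟨m, ⟨hmE, hmD⟩, hcov⟩ := hperf
  -- m has at least n edges
  have hmcard : n ≤ m.card := by
    rw [← hY]
    have : ∀ y : Y, ∃ e, e ∈ m ∧ e.2 = y := fun y => by
      obtain ⟨e, he, he2⟩ := hcov y; exact ⟨e, he, he2⟩
    choose f hf1 hf2 using this
    rw [← Finset.card_univ]
    refine Finset.card_le_card_of_injOn f (fun y _ => hf1 y) ?_
    intro y _ y' _ hyy'
    rw [← hf2 y, ← hf2 y', hyy']
  let P : (X ⊕ X) × Y → Prop := fun e => ∀ s : X, e.1 = Sum.inr s → s ∈ T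
  let mT := m.filter P
  let bad := m.filter (fun e => ¬ P e)
  have hsplit : mT.card + bad.card = m.card := Finset.card_filter_add_card_filter_not _
  -- bad injects into W \ T
  have hbad : bad.card ≤ (W \ T).card := by
    let g : (X ⊕ X) × Y → X := fun e => Sum.elim id id e.1
    refine Finset.card_le_card_of_injOn g ?_ ?_
    · intro e he
      rw [Finset.mem_coe, Finset.mem_filter] at he
      obtain ⟨hem, heP⟩ := he
      obtain ⟨s, hs⟩ : ∃ s, e.1 = Sum.inr s := by
        rcases h1 : e.1 with x | s
        · exact absurd (fun s hs => by rw [h1] at hs; exact (Sum.inl_ne_inr hs).elim) heP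
        · exact ⟨s, rfl⟩
      have hsW : s ∈ W := by
        have := hmE hem
        rw [show e = (Sum.inr s, e.2) from Prod.ext hs rfl, mem_pendant_inr] at this
        exact this.1
      have hsT : s ∉ T := fun hsT => heP (fun s' hs' => by
        rw [hs] at hs'; rwa [← Sum.inr.inj hs'])
      simp only [g, hs, Sum.elim_inr, id]
      exact Finset.mem_sdiff.mpr ⟨hsW, hsT⟩
    · intro e he e' he' hgee'
      rw [Finset.mem_coe, Finset.mem_filter] at he he'
      by_contra hne
      obtain ⟨s, hs⟩ : ∃ s, e.1 = Sum.inr s := by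
        rcases h1 : e.1 with x | s
        · exact absurd (fun s hh => by rw [h1] at hh; exact (Sum.inl_ne_inr hh).elim) he.2
        · exact ⟨s, rfl⟩
      obtain ⟨s', hs'⟩ : ∃ s', e'.1 = Sum.inr s' := by
        rcases h1 : e'.1 with x | s'
        · exact absurd (fun s hh => by rw [h1] at hh; exact (Sum.inl_ne_inr hh).elim) he'.2
        · exact ⟨s', rfl⟩
      have h1 := (hmD e he.1 e' he'.1 hne).1
      apply h1
      rw [hs, hs']
      simp only [g, hs, hs', Sum.elim_inr, id] at hgee'
      rw [hgee']
  have hWT : (W \ T).card = K - T.card := by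
    rw [Finset.card_sdiff_of_subset hT, hW]
  have hTK : T.card ≤ K := hW ▸ Finset.card_le_card hT
  -- mT is a matching in pendantGraph E π T
  have hmT : IsMatching (pendantGraph E π T) mT := by
    constructor
    · intro e he
      rw [Finset.mem_filter] at he
      obtain ⟨hem, heP⟩ := he
      rcases h1 : e.1 with x | s
      · have := hmE hem
        rw [show e = (Sum.inl x, e.2) from Prod.ext h1 rfl] at this ⊢
        rw [mem_pendant_inl] at this
        exact mem_pendant_inl.mpr this
      · have hsT : s ∈ T := heP s h1
        have := hmE hem
        rw [show e = (Sum.inr s, e.2) from Prod.ext h1 rfl] at this ⊢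
        rw [mem_pendant_inr] at this
        exact mem_pendant_inr.mpr ⟨hsT, this.2⟩
    · intro e he e' he' hne
      exact hmD e (Finset.mem_filter.mp he).1 e' (Finset.mem_filter.mp he').1 hne
  have hle : mT.card ≤ matchNum (pendantGraph E π T) :=
    le_csSup (matchNum_bddAbove _) ⟨mT, hmT, rfl⟩
  have hbad' : bad.card ≤ K - T.card := hWT ▸ hbad
  -- the pendant edges of T alone form a matching of size |T|
  have hinj : Function.Injective (fun s : X => ((Sum.inr s : X ⊕ X), π s)) := by
    intro a b h
    exact Sum.inr.inj (congrArg Prod.fst h)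
  have hpend : IsMatching (pendantGraph E π T)
      (T.image fun s => ((Sum.inr s : X ⊕ X), π s)) := by
    constructor
    · intro e he
      obtain ⟨s, hs, rfl⟩ := Finset.mem_image.mp he
      exact mem_pendant_inr.mpr ⟨hs, rfl⟩
    · intro e he e' he' hne
      obtain ⟨s, _, rfl⟩ := Finset.mem_image.mp he
      obtain ⟨s', _, rfl⟩ := Finset.mem_image.mp he'
      have hss' : s ≠ s' := fun h => hne (by rw [h])
      exact ⟨fun h => hss' (Sum.inr.inj h), fun h => hss' (hπ h)⟩
  have hle2 : T.card ≤ matchNum (pendantGraph E π T) :=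
    le_csSup (matchNum_bddAbove _)
      ⟨_, hpend, Finset.card_image_of_injective T hinj⟩
  clear hbad hWT hbase hX hY hcov hmE hmD hmT hπ hT hW
  omega
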